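/- Let φ be an LTLf formula over P = X ∪ Y and let G = (2^(X∪Y), S, s₀, δ, F) be a DFA such that s₀ ∉ F and G accepts exactly those nonempty finite words over 2^(X∪Y) which, viewed as finite traces over 2^P, satisfy φ. Let n be such that W_{n+1} = W_n, let τ : S → 2^Y be any function such that (s, τ(s)) ∈ T_n for every s ∈ W_n, and suppose s₀ ∈ W_n. Then the strategy g_τ defined by g_τ(X₀,…,X_{m−1}) = τ(s'_m), where s'₀ = s₀ and s'_{j+1} = δ(s'_j, X_j ∪ τ(s'_j)), witnesses the realizability of φ with respect to ⟨X, Y⟩: for every infinite sequence X₀, X₁, … of subsets of X there exists k ≥ 0 such that the finite trace (X₀ ∪ g_τ(ε)), (X₁ ∪ g_τ(X₀)), …, (X_k ∪ g_τ(X₀,…,X_{k−1})) satisfies φ. -/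
import Mathlib


/-- Syntax of LTLf formulas over atomic propositions `P`. -/
inductive LTLf (P : Type) : Type where
  | tru : LTLf P
  | fls : LTLf P
  | atom : P → LTLf P
  | neg : LTLf P → LTLf P
  | conj : LTLf P → LTLf P → LTLf P
  | next : LTLf P → LTLf P
  | until_ : LTLf P → LTLf P → LTLf P

/-- Satisfaction of an LTLf formula on a finite trace `ρ` (a list of
propositional interpretations) at position `i`. -/
def Sat {P : Type} : LTLf P → List (Set P) → ℕ → Prop
  | .tru, _, _ => True
  | .fls, _, _ => False
  | .atom a, ρ, i => a ∈ ρ.getD i ∅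
  | .neg φ, ρ, i => ¬ Sat φ ρ i
  | .conj φ ψ, ρ, i => Sat φ ρ i ∧ Sat ψ ρ i
  | .next φ, ρ, i => i + 1 < ρ.length ∧ Sat φ ρ (i + 1)
  | .until_ φ ψ, ρ, i =>
      ∃ j, i ≤ j ∧ j < ρ.length ∧ Sat ψ ρ j ∧ ∀ k, i ≤ k → k < j → Sat φ ρ k

/-- Weak next: `Xw φ := ¬ X ¬ φ`. -/
def LTLf.wnext {P : Type} (φ : LTLf P) : LTLf P := .neg (.next (.neg φ))

/-- Release: `φ₁ R φ₂ := ¬ (¬ φ₁ U ¬ φ₂)`. -/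
def LTLf.release {P : Type} (φ ψ : LTLf P) : LTLf P :=
  .neg (.until_ (.neg φ) (.neg ψ))

/-- Eventually: `F φ := ⊤ U φ`. -/
def LTLf.ev {P : Type} (φ : LTLf P) : LTLf P := .until_ .tru φ

/-- Always: `G φ := ⊥ R φ`. -/
def LTLf.alw {P : Type} (φ : LTLf P) : LTLf P := LTLf.release .fls φ

/-- The letter `X' ∪ Y' ∈ 2^(X∪Y)` determined by `X' ⊆ X` and `Y' ⊆ Y`,
where the disjoint union `X ∪ Y` is represented by the sum type `X ⊕ Y`. -/
def join {X Y : Type} (X' : Set X) (Y' : Set Y) : Set (X ⊕ Y) :=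
  {p | Sum.elim (· ∈ X') (· ∈ Y') p}

/-- The fixpoint approximants `(T_i, W_i)` for the DFA game on
`G = (2^(X∪Y), S, s₀, δ, F)`:
`T₀ = F × 2^Y`, `W₀ = F`,
`T_{i+1} = T_i ∪ {(s, Y') : s ∉ W_i and δ(s, X' ∪ Y') ∈ W_i for every X' ⊆ X}`,
`W_{i+1} = {s : (s, Y') ∈ T_{i+1} for some Y' ⊆ Y}`. -/
def TWJ {S X Y : Type} (δ : S → Set (X ⊕ Y) → S) (F : Set S) :
    ℕ → Set (S × Set Y) × Set S
  | 0 => ({p | p.1 ∈ F}, F)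
  | i + 1 =>
      let T := (TWJ δ F i).1
      let W := (TWJ δ F i).2
      let T' := T ∪ {p | p.1 ∉ W ∧ ∀ X' : Set X, δ p.1 (join X' p.2) ∈ W}
      (T', {s | ∃ Y' : Set Y, (s, Y') ∈ T'})

/-- `T_i`. -/
def TsetJ {S X Y : Type} (δ : S → Set (X ⊕ Y) → S) (F : Set S) (i : ℕ) :
    Set (S × Set Y) := (TWJ δ F i).1

/-- `W_i`. -/
def WsetJ {S X Y : Type} (δ : S → Set (X ⊕ Y) → S) (F : Set S) (i : ℕ) :
    Set S := (TWJ δ F i).2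

section Aux

variable {S X Y : Type} (δ : S → Set (X ⊕ Y) → S) (F : Set S)

lemma TsetJ_succ (i : ℕ) :
    TsetJ δ F (i + 1) = TsetJ δ F i ∪
      {p | p.1 ∉ WsetJ δ F i ∧ ∀ X' : Set X, δ p.1 (join X' p.2) ∈ WsetJ δ F i} := rfl

lemma WsetJ_char (i : ℕ) :
    WsetJ δ F i = {s | ∃ Y' : Set Y, (s, Y') ∈ TsetJ δ F i} := by
  cases i with
  | zero =>
    ext s
    simp only [WsetJ, TsetJ, TWJ, Set.mem_setOf_eq]
    exact ⟨fun h => ⟨∅, h⟩, fun ⟨Y', h⟩ => h⟩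
  | succ i => rfl

lemma TsetJ_mono : Monotone (TsetJ δ F) := by
  apply monotone_nat_of_le_succ
  intro i
  rw [TsetJ_succ]
  exact Set.subset_union_left

lemma WsetJ_mono : Monotone (WsetJ δ F) := by
  intro i j hij s hs
  rw [WsetJ_char] at hs ⊢
  obtain ⟨Y', h⟩ := hs
  exact ⟨Y', TsetJ_mono δ F hij h⟩

lemma TsetJ_down : ∀ j i (s : S) (Y' : Set Y),
    (s, Y') ∈ TsetJ δ F j → s ∈ WsetJ δ F i → (s, Y') ∈ TsetJ δ F i := by
  intro j
  induction j with
  | zero =>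
    intro i s Y' h _
    exact TsetJ_mono δ F (Nat.zero_le i) h
  | succ j ih =>
    intro i s Y' h hw
    rw [TsetJ_succ] at h
    rcases h with h | ⟨h1, h2⟩
    · exact ih i s Y' h hw
    · rcases Nat.lt_or_ge j i with hji | hij
      · exact TsetJ_mono δ F hji (by rw [TsetJ_succ]; exact Or.inr ⟨h1, h2⟩)
      · exact absurd (WsetJ_mono δ F hij hw) h1

end Aux

/-- Let `φ` be an LTLf formula over `P = X ∪ Y` (represented as `X ⊕ Y`) and
let `G = (2^(X∪Y), S, s₀, δ, F)` be a DFA such that `s₀ ∉ F` and `G` accepts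
exactly those nonempty finite words over `2^(X∪Y)` which, viewed as finite
traces, satisfy `φ`.  Let `n` be such that `W_{n+1} = W_n`, let `τ : S → 2^Y`
be any function such that `(s, τ(s)) ∈ T_n` for every `s ∈ W_n`, and suppose
`s₀ ∈ W_n`.  Then the strategy `g_τ` defined by `g_τ(X₀,…,X_{m−1}) = τ(s'_m)`,
where `s'₀ = s₀` and `s'_{j+1} = δ(s'_j, X_j ∪ τ(s'_j))`, witnesses the

realizability of `φ` with respect to `⟨X, Y⟩`. -/
theorem synthesized_strategy_realizes {S X Y : Type}
    [Fintype S] [Fintype X] [Fintype Y]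
    (φ : LTLf (X ⊕ Y)) (δ : S → Set (X ⊕ Y) → S) (s₀ : S) (F : Set S)
    (h₀ : s₀ ∉ F)
    (hacc : ∀ w : List (Set (X ⊕ Y)), w ≠ [] →
      (List.foldl δ s₀ w ∈ F ↔ Sat φ w 0))
    (n : ℕ) (hfix : WsetJ δ F (n + 1) = WsetJ δ F n)
    (τ : S → Set Y) (hτ : ∀ s ∈ WsetJ δ F n, (s, τ s) ∈ TsetJ δ F n)
    (hs₀ : s₀ ∈ WsetJ δ F n) :
    ∀ xs : ℕ → Set X, ∃ k : ℕ,
      Sat φ (List.ofFn fun j : Fin (k + 1) =>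
        join (xs j)
          ((fun l : List (Set X) =>
              τ (l.foldl (fun t X' => δ t (join X' (τ t))) s₀))
            (List.ofFn fun m : Fin j.val => xs m))) 0 := by
  intro xs
  -- the run states
  set st : ℕ → S := fun j => Nat.rec s₀ (fun j s => δ s (join (xs j) (τ s))) j with hst
  have hst0 : st 0 = s₀ := rfl
  have hstsucc : ∀ j, st (j + 1) = δ (st j) (join (xs j) (τ (st j))) := fun j => rfl
  -- inner foldl computes st
  have hinner : ∀ j : ℕ,
      (List.ofFn fun m : Fin j => xs m).foldl (fun t X' => δ t (join X' (τ t))) s₀ = st j := by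
    intro j
    induction j with
    | zero => rfl
    | succ j ih =>
      rw [List.ofFn_succ', List.concat_eq_append, List.foldl_append]
      simp only [List.foldl_cons, List.foldl_nil, Fin.coe_castSucc, Fin.val_last]
      rw [ih, hstsucc]
  -- letters of the produced word
  set w : ℕ → Set (X ⊕ Y) := fun j => join (xs j) (τ (st j)) with hw
  have hfold : ∀ m : ℕ, List.foldl δ s₀ (List.ofFn fun j : Fin m => w j) = st m := by
    intro m
    induction m with
    | zero => rfl
    | succ m ih =>
      rw [List.ofFn_succ', List.concat_eq_append, List.foldl_append]
      simp only [List.foldl_cons, List.foldl_nil, Fin.coe_castSucc, Fin.val_last]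
      rw [ih, hstsucc]
  -- main induction: eventually reaching F
  have main : ∀ i : ℕ, i ≤ n → ∀ j : ℕ,
      (st j, τ (st j)) ∈ TsetJ δ F i → ∃ m, j ≤ m ∧ st m ∈ F := by
    intro i
    induction i with
    | zero =>
      intro _ j ht
      exact ⟨j, le_refl j, ht⟩
    | succ i ih =>
      intro hin j ht
      rw [TsetJ_succ] at ht
      rcases ht with ht | ⟨h1, h2⟩
      · exact ih (Nat.le_of_succ_le hin) j ht
      · have hnext : st (j + 1) ∈ WsetJ δ F i := by
          rw [hstsucc]; exact h2 (xs j)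
        have hnextn : st (j + 1) ∈ WsetJ δ F n :=
          WsetJ_mono δ F (Nat.le_of_succ_le hin) hnext
        have hti : (st (j + 1), τ (st (j + 1))) ∈ TsetJ δ F i :=
          TsetJ_down δ F n i _ _ (hτ _ hnextn) hnext
        obtain ⟨m, hm, hmF⟩ := ih (Nat.le_of_succ_le hin) (j + 1) hti
        exact ⟨m, Nat.le_trans (Nat.le_succ j) hm, hmF⟩
  obtain ⟨m, _, hmF⟩ := main n (le_refl n) 0 (hτ s₀ hs₀)
  -- m ≥ 1 since s₀ ∉ F
  obtain ⟨k, rfl⟩ : ∃ k, m = k + 1 := by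
    cases m with
    | zero => exact absurd hmF h₀
    | succ k => exact ⟨k, rfl⟩
  refine ⟨k, ?_⟩
  have heq : (List.ofFn fun j : Fin (k + 1) =>
        join (xs j)
          ((fun l : List (Set X) =>
              τ (l.foldl (fun t X' => δ t (join X' (τ t))) s₀))
            (List.ofFn fun m : Fin j.val => xs m)))
      = List.ofFn fun j : Fin (k + 1) => w j := by
    refine congrArg List.ofFn (funext fun j => ?_)
    simp only [hw]
    rw [hinner j.val]
  rw [heq]
  rw [← hacc _ (by simp)]
  rw [hfold]
  exact hmF
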